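/- For positive reals x, x', y, y', d, d', D, D': if the 'stable distances' satisfy |x-x'|/√(xx') ≤ m and |d-d'|/√(dd') ≤ m, then |(x+d)-(x'+d')|/√((x+d)(x'+d')) ≤ m. In other words, d_s(x+d, x'+d') ≤ max(d_s(x,x'), d_s(d,d')). -/

import Mathlib

noncomputable def ds (x y : ℝ) : ℝ := |x - y| / Real.sqrt (x * y)

lemma sqrt_key (x x' d d' : ℝ) (hx : 0 < x) (hx' : 0 < x') (hd : 0 < d) (hd' : 0 < d') :
    Real.sqrt (x * x') + Real.sqrt (d * d') ≤ Real.sqrt ((x + d) * (x' + d')) := by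
  have h1 : 0 ≤ Real.sqrt (x * x') + Real.sqrt (d * d') := by positivity
  rw [← Real.sqrt_sq h1]
  apply Real.sqrt_le_sqrt
  have hs : Real.sqrt (x * x') * Real.sqrt (d * d') = Real.sqrt ((x * d') * (d * x')) := by
    rw [← Real.sqrt_mul (by positivity)]; ring_nf
  have hamgm : 2 * Real.sqrt ((x * d') * (d * x')) ≤ x * d' + d * x' := by
    rw [Real.sqrt_mul (by positivity)]
    nlinarith [Real.sq_sqrt (show (0:ℝ) ≤ x * d' by positivity),
      Real.sq_sqrt (show (0:ℝ) ≤ d * x' by positivity),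
      sq_nonneg (Real.sqrt (x * d') - Real.sqrt (d * x'))]
  have hxx := Real.sq_sqrt (show (0:ℝ) ≤ x * x' by positivity)
  have hdd := Real.sq_sqrt (show (0:ℝ) ≤ d * d' by positivity)
  nlinarith [hs, hamgm]

lemma ds_add_le (x x' d d' : ℝ) (hx : 0 < x) (hx' : 0 < x') (hd : 0 < d) (hd' : 0 < d')
    (m : ℝ) (h1 : ds x x' ≤ m) (h2 : ds d d' ≤ m) : ds (x + d) (x' + d') ≤ m := by
  have hm : 0 ≤ m := le_trans (by unfold ds; positivity) h1
  have hsx : 0 < Real.sqrt (x * x') := Real.sqrt_pos.mpr (by positivity)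
  have hsd : 0 < Real.sqrt (d * d') := Real.sqrt_pos.mpr (by positivity)
  have hsS : 0 < Real.sqrt ((x + d) * (x' + d')) := Real.sqrt_pos.mpr (by positivity)
  have hb1 : |x - x'| ≤ m * Real.sqrt (x * x') := by
    have := (div_le_iff₀ hsx).mp h1; linarith
  have hb2 : |d - d'| ≤ m * Real.sqrt (d * d') := by
    have := (div_le_iff₀ hsd).mp h2; linarith
  have hkey := sqrt_key x x' d d' hx hx' hd hd'
  have htri : |x + d - (x' + d')| ≤ |x - x'| + |d - d'| := by
    have := abs_add_le (x - x') (d - d'); rw [show x + d - (x' + d') = x - x' + (d - d') by ring]; exact this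
  rw [ds, div_le_iff₀ hsS]
  calc |x + d - (x' + d')| ≤ |x - x'| + |d - d'| := htri
    _ ≤ m * Real.sqrt (x * x') + m * Real.sqrt (d * d') := by linarith
    _ = m * (Real.sqrt (x * x') + Real.sqrt (d * d')) := by ring
    _ ≤ m * Real.sqrt ((x + d) * (x' + d')) := by nlinarith

theorem ds_add_le_max (x x' d d' : ℝ) (hx : 0 < x) (hx' : 0 < x') (hd : 0 < d) (hd' : 0 < d')
    (m : ℝ) (h1 : ds x x' ≤ m) (h2 : ds d d' ≤ m) :
    ds (x + d) (x' + d') ≤ m ∧ ds (x + d) (x' + d') ≤ max (ds x x') (ds d d') := by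
  refine ⟨ds_add_le x x' d d' hx hx' hd hd' m h1 h2,
    ds_add_le x x' d d' hx hx' hd hd' _ (le_max_left _ _) (le_max_right _ _)⟩
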